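/- Let G be a complete C-M bipartite graph on {x_1,...,x_n} ∪ {y_1,...,y_n}, i.e., {x_i,y_j} ∈ E(G) iff i ≤ j. Then the minimal vertex covers of G are exactly the sets {x_1,...,x_j} ∪ {y_{j+1},...,y_n} for j = 0,1,...,n. In particular, G has exactly n+1 minimal vertex covers, all of cardinality n. -/

import Mathlib

def IsCover (n : ℕ) (E : Fin n → Fin n → Prop) (C : Set (Fin n ⊕ Fin n)) : Prop :=
  ∀ i j, E i j → Sum.inl i ∈ C ∨ Sum.inr j ∈ C

def IsMinCover (n : ℕ) (E : Fin n → Fin n → Prop) (C : Set (Fin n ⊕ Fin n)) : Prop :=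
  IsCover n E C ∧ ∀ D ⊂ C, ¬ IsCover n E D

private lemma card_lt_set (n j : ℕ) (hj : j ≤ n) : ({i : Fin n | i.val < j}).ncard = j := by
  have : ({i : Fin n | i.val < j}).ncard = Nat.card {i : Fin n // i.val < j} := rfl
  rw [this, Nat.card_eq_fintype_card, Fintype.card_fin_lt_of_le hj]

private lemma card_ge_set (n j : ℕ) (hj : j ≤ n) : ({i : Fin n | j ≤ i.val}).ncard = n - j := by
  have hc : {i : Fin n | j ≤ i.val} = {i : Fin n | i.val < j}ᶜ := by
    ext i; simp [Nat.not_lt]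
  have h1 := card_lt_set n j hj
  have h2 := Set.ncard_add_ncard_compl {i : Fin n | i.val < j}
  rw [Nat.card_eq_fintype_card, Fintype.card_fin] at h2
  rw [hc]; omega

private lemma inl_mem_iff (n j : ℕ) (a : Fin n) :
    Sum.inl a ∈ Sum.inl '' {i : Fin n | i.val < j} ∪ Sum.inr '' {i : Fin n | j ≤ i.val}
      ↔ a.val < j := by
  simp

private lemma minCover_of (n : ℕ) (E : Fin n → Fin n → Prop) (hE : ∀ i j, E i j ↔ i ≤ j)
    (j : ℕ) (hj : j ≤ n) :
    IsMinCover n E (Sum.inl '' {i : Fin n | i.val < j} ∪ Sum.inr '' {i : Fin n | j ≤ i.val}) := by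
  constructor
  · intro a b hab
    rw [hE] at hab
    by_cases h : a.val < j
    · exact Or.inl (Or.inl ⟨a, h, rfl⟩)
    · exact Or.inr (Or.inr ⟨b, le_trans (Nat.le_of_not_lt h) hab, rfl⟩)
  · intro D hD hcov
    have hsub := hD.subset
    obtain ⟨c, hcC, hcD⟩ := Set.exists_of_ssubset hD
    rcases hcC with ⟨a, ha, rfl⟩ | ⟨a, ha, rfl⟩
    · rcases hcov a a ((hE a a).mpr le_rfl) with h | h
      · exact hcD h
      · rcases hsub h with ⟨b, hb, hba⟩ | ⟨b, hb, hba⟩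
        · exact absurd hba (by simp)
        · obtain rfl : b = a := Sum.inr.inj hba
          exact absurd ha (Nat.not_lt.mpr hb)
    · rcases hcov a a ((hE a a).mpr le_rfl) with h | h
      · rcases hsub h with ⟨b, hb, hba⟩ | ⟨b, hb, hba⟩
        · obtain rfl : b = a := Sum.inl.inj hba
          exact absurd hb (Nat.not_lt.mpr ha)
        · exact absurd hba (by simp)
      · exact hcD h

/-- the minimal vertex covers of the complete C-M bipartite graph
(`{x_i,y_j} ∈ E ⟺ i ≤ j`) are exactly the sets `{x_1,…,x_j} ∪ {y_{j+1},…,y_n}` for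
`j = 0,…,n`; there are exactly `n+1` of them, each of cardinality `n`. -/
theorem stmt10 (n : ℕ) (E : Fin n → Fin n → Prop) (hE : ∀ i j, E i j ↔ i ≤ j) :
    (∀ C, IsMinCover n E C ↔
      ∃ j ≤ n, C = Sum.inl '' {i : Fin n | i.val < j} ∪ Sum.inr '' {i : Fin n | j ≤ i.val}) ∧
    {C | IsMinCover n E C}.ncard = n + 1 ∧
    (∀ C, IsMinCover n E C → C.ncard = n) := by
  have hchar : ∀ C, IsMinCover n E C ↔
      ∃ j ≤ n, C = Sum.inl '' {i : Fin n | i.val < j} ∪ Sum.inr '' {i : Fin n | j ≤ i.val} := by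
    intro C
    constructor
    · rintro ⟨hcov, hmin⟩
      set S : Set (Fin n) := {i | Sum.inl i ∈ C} with hS
      set T : Set (Fin n) := {i | Sum.inr i ∈ C} with hT
      have hcov' : ∀ a b : Fin n, a ≤ b → a ∈ S ∨ b ∈ T := fun a b hab =>
        hcov a b ((hE a b).mpr hab)
      -- S is downward closed
      have hSdown : ∀ a b : Fin n, a ≤ b → b ∈ S → a ∈ S := by
        intro a b hab hbS
        by_contra haS
        have hT' : ∀ k : Fin n, a ≤ k → k ∈ T := fun k hk =>
          (hcov' a k hk).resolve_left haS
        apply hmin (C \ {Sum.inl b}) ⟨Set.diff_subset, fun h => (h hbS).2 rfl⟩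
        intro u v huv
        rw [hE] at huv
        by_cases hub : u = b
        · subst hub
          exact Or.inr ⟨hT' v (le_trans hab huv), by simp⟩
        · rcases hcov' u v huv with h | h
          · exact Or.inl ⟨h, by simp [hub]⟩
          · exact Or.inr ⟨h, by simp⟩
      -- T is upward closed
      have hTup : ∀ a b : Fin n, a ≤ b → a ∈ T → b ∈ T := by
        intro a b hab haT
        by_contra hbT
        have hS' : ∀ k : Fin n, k ≤ b → k ∈ S := fun k hk =>
          (hcov' k b hk).resolve_right hbT
        apply hmin (C \ {Sum.inr a}) ⟨Set.diff_subset, fun h => (h haT).2 rfl⟩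
        intro u v huv
        rw [hE] at huv
        by_cases hva : v = a
        · subst hva
          exact Or.inl ⟨hS' u (le_trans huv hab), by simp⟩
        · rcases hcov' u v huv with h | h
          · exact Or.inl ⟨h, by simp⟩
          · exact Or.inr ⟨h, by simp [hva]⟩
      -- S and T are disjoint
      have hdisj : ∀ a : Fin n, a ∈ S → a ∉ T := by
        intro a haS haT
        apply hmin (C \ {Sum.inl a}) ⟨Set.diff_subset, fun h => (h haS).2 rfl⟩
        intro u v huv
        rw [hE] at huv
        by_cases hua : u = a
        · subst hua
          exact Or.inr ⟨hTup u v huv haT, by simp⟩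
        · rcases hcov' u v huv with h | h
          · exact Or.inl ⟨h, by simp [hua]⟩
          · exact Or.inr ⟨h, by simp⟩
      -- define j
      set M : Set ℕ := {m | ∀ i : Fin n, m ≤ i.val → i ∉ S} with hM
      have hnM : n ∈ M := fun i hi => absurd i.isLt (Nat.not_lt.mpr hi)
      set j : ℕ := sInf M with hj
      have hjn : j ≤ n := Nat.sInf_le hnM
      have hjM : j ∈ M := Nat.sInf_mem ⟨n, hnM⟩
      have hSeq : S = {i : Fin n | i.val < j} := by
        ext i
        constructor
        · intro hiS
          by_contra hlt
          exact hjM i (Nat.le_of_not_lt hlt) hiS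
        · intro hlt
          have : i.val ∉ M := fun h => Nat.not_lt.mpr (Nat.sInf_le h) hlt
          simp only [hM, Set.mem_setOf_eq, not_forall, not_not] at this
          obtain ⟨b, hib, hbS⟩ := this
          exact hSdown i b hib hbS
      have hTeq : T = {i : Fin n | j ≤ i.val} := by
        ext i
        constructor
        · intro hiT
          by_contra hlt
          exact hdisj i (hSeq ▸ (show i ∈ {i : Fin n | i.val < j} from Nat.lt_of_not_le hlt)) hiT
        · intro hge
          have hiS : i ∉ S := hjM i hge
          exact (hcov' i i le_rfl).resolve_left hiS
      refine ⟨j, hjn, ?_⟩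
      rw [← hSeq, ← hTeq]
      ext c
      cases c <;> simp [hS, hT]
    · rintro ⟨j, hj, rfl⟩
      exact minCover_of n E hE j hj
  refine ⟨hchar, ?_, ?_⟩
  · have hset : {C | IsMinCover n E C} =
        (fun j : ℕ => Sum.inl '' {i : Fin n | i.val < j} ∪ Sum.inr '' {i : Fin n | j ≤ i.val})
          '' (Set.Iic n) := by
      ext C
      simp only [Set.mem_setOf_eq, hchar C, Set.mem_image, Set.mem_Iic]
      constructor
      · rintro ⟨j, hj, rfl⟩; exact ⟨j, hj, rfl⟩
      · rintro ⟨j, hj, rfl⟩; exact ⟨j, hj, rfl⟩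
    rw [hset, Set.ncard_image_of_injOn, ← Nat.card_coe_set_eq, Nat.card_eq_fintype_card,
      ← Nat.card_eq_fintype_card, Nat.card_coe_set_eq, Set.ncard_Iic_nat]
    have key : ∀ a b : ℕ, b ≤ n → a < b →
        Sum.inl '' {i : Fin n | i.val < a} ∪ Sum.inr '' {i : Fin n | a ≤ i.val} ≠
        (Sum.inl '' {i : Fin n | i.val < b} ∪ Sum.inr '' {i : Fin n | b ≤ i.val}) := by
      intro a b hb hlt hab
      have hbn : a < n := lt_of_lt_of_le hlt hb
      have h1 := (inl_mem_iff n b ⟨a, hbn⟩).mpr hlt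
      rw [← hab, inl_mem_iff] at h1
      exact absurd h1 (lt_irrefl a)
    intro a ha b hb hab
    simp only [Set.mem_Iic] at ha hb
    rcases lt_trichotomy a b with h | h | h
    · exact absurd hab (key a b hb h)
    · exact h
    · exact absurd hab.symm (key b a ha h)
  · intro C hC
    obtain ⟨j, hj, rfl⟩ := (hchar C).mp hC
    rw [Set.ncard_union_eq ?_ (Set.toFinite _) (Set.toFinite _),
      Set.ncard_image_of_injective _ Sum.inl_injective,
      Set.ncard_image_of_injective _ Sum.inr_injective,
      card_lt_set n j hj, card_ge_set n j hj]
    · omega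
    · rw [Set.disjoint_iff]
      rintro c ⟨⟨a, _, rfl⟩, ⟨b, _, hb⟩⟩
      exact absurd hb (by simp)
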